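/- Let u_k, u_{k-1} be unit vectors in ℝⁿ and δ_k ≥ 0 a real number, and set ω_k = u_k − δ_k u_{k-1}. Then ‖u_k − u_{k-1}‖ ≤ 2‖ω_k‖. -/

import Mathlib

/-- For unit vectors `u_k, u_{k-1}` and `δ_k ≥ 0`, with `ω_k = u_k − δ_k u_{k-1}`,
one has `‖u_k − u_{k-1}‖ ≤ 2‖ω_k‖`. -/
theorem stmt_11 {n : ℕ} (uk uk1 : EuclideanSpace ℝ (Fin n)) (δ : ℝ)
    (huk : ‖uk‖ = 1) (huk1 : ‖uk1‖ = 1) (hδ : 0 ≤ δ) :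
    ‖uk - uk1‖ ≤ 2 * ‖uk - δ • uk1‖ := by
  have hsym : ‖δ • uk - uk1‖ = ‖uk - δ • uk1‖ := by
    have h2 : ‖δ • uk - uk1‖ ^ 2 = ‖uk - δ • uk1‖ ^ 2 := by
      rw [← real_inner_self_eq_norm_sq, ← real_inner_self_eq_norm_sq]
      simp only [inner_sub_sub_self, real_inner_smul_left, real_inner_smul_right,
        real_inner_self_eq_norm_sq, huk, huk1, real_inner_comm uk uk1, norm_smul,
        Real.norm_of_nonneg hδ]
      ring
    exact sq_eq_sq₀ (norm_nonneg _) (norm_nonneg _) |>.mp h2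
  have key : (1 + δ) * ‖uk - uk1‖ ≤ 2 * ‖uk - δ • uk1‖ := by
    have heq : (1 + δ) • (uk - uk1) = (uk - δ • uk1) + (δ • uk - uk1) := by
      module
    calc (1 + δ) * ‖uk - uk1‖ = ‖(1 + δ) • (uk - uk1)‖ := by
          rw [norm_smul, Real.norm_of_nonneg (by linarith)]
      _ ≤ ‖uk - δ • uk1‖ + ‖δ • uk - uk1‖ := by rw [heq]; exact norm_add_le _ _
      _ = 2 * ‖uk - δ • uk1‖ := by rw [hsym]; ring
  nlinarith [norm_nonneg (uk - uk1)]
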